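/- Let A be an associative unital ring with a two-sided ideal 𝔞 that is nilpotent and such that the associated graded ring gr_𝔞 A is commutative. Then for every s ∈ A the multiplicative set S := {s^j : j ∈ ℕ} is a denominator set in A; that is: (left Ore condition) for all a ∈ A and n ∈ ℕ there exist b ∈ A and m ∈ ℕ with s^m·a = b·s^n; (right Ore condition) for all a ∈ A and n ∈ ℕ there exist b ∈ A and m ∈ ℕ with a·s^m = s^n·b; (left reversibility) if a·s^n = 0 then s^m·a = 0 for some m; (right reversibility) if s^n·a = 0 then a·s^m = 0 for some m. Consequently the Ore ring of fractions A_s = A S^{-1} exists. -/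

import Mathlib

/-- The `n`-th power of a subset `I` of a ring, as an additive subgroup:
`I^0 = A`, and `I^{n+1}` is the additive subgroup generated by the products `a * b`
with `a ∈ I` and `b ∈ I^n`. -/
def setPow {A : Type} [Ring A] (I : Set A) : ℕ → AddSubgroup A
  | 0 => ⊤
  | n + 1 => AddSubgroup.closure {x | ∃ a ∈ I, ∃ b ∈ setPow I n, x = a * b}


section Aux

variable {A : Type} [Ring A]

private def LL (s : A) : AddMonoid.End A := AddMonoidHom.mulLeft s
private def RR (s : A) : AddMonoid.End A := AddMonoidHom.mulRight s
private def DL (s : A) : AddMonoid.End A := LL s - RR s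
private def DR (s : A) : AddMonoid.End A := RR s - LL s

@[simp] private lemma LL_apply (s x : A) : LL s x = s * x := rfl
@[simp] private lemma RR_apply (s x : A) : RR s x = x * s := rfl
@[simp] private lemma DL_apply (s x : A) : DL s x = s * x - x * s := rfl
@[simp] private lemma DR_apply (s x : A) : DR s x = x * s - s * x := rfl

private lemma commDR (s : A) : Commute (DL s) (RR s) := by
  apply AddMonoidHom.ext
  intro x
  show (s * (x * s) - (x * s) * s) = ((s * x - x * s) * s)
  noncomm_ring

private lemma commDL (s : A) : Commute (DR s) (LL s) := by
  apply AddMonoidHom.ext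
  intro x
  show ((s * x) * s - s * (s * x)) = (s * (x * s - s * x))
  noncomm_ring

private lemma Rpow (s : A) (j : ℕ) (x : A) : ((RR s) ^ j) x = x * s ^ j := by
  induction j generalizing x with
  | zero => simp
  | succ n ih =>
    rw [pow_succ]
    show ((RR s) ^ n) (x * s) = x * s ^ (n + 1)
    rw [ih, mul_assoc, ← pow_succ']

private lemma Lpow (s : A) (j : ℕ) (x : A) : ((LL s) ^ j) x = s ^ j * x := by
  induction j generalizing x with
  | zero => simp
  | succ n ih =>
    rw [pow_succ]
    show ((LL s) ^ n) (s * x) = s ^ (n + 1) * x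
    rw [ih, ← mul_assoc, ← pow_succ]

private lemma DLpow_mul (s : A) (k j : ℕ) (x : A) :
    ((DL s) ^ k) x * s ^ j = ((DL s) ^ k) (x * s ^ j) := by
  have h := (commDR s).pow_pow k j
  have h1 : ((DL s) ^ k * (RR s) ^ j) x = ((RR s) ^ j * (DL s) ^ k) x := by rw [h]
  have h2 : ((DL s) ^ k) (((RR s) ^ j) x) = ((RR s) ^ j) (((DL s) ^ k) x) := h1
  rw [Rpow, Rpow] at h2
  exact h2.symm

private lemma mul_DRpow (s : A) (k j : ℕ) (x : A) :
    s ^ j * ((DR s) ^ k) x = ((DR s) ^ k) (s ^ j * x) := by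
  have h := (commDL s).pow_pow k j
  have h2 : ((DR s) ^ k) (((LL s) ^ j) x) = ((LL s) ^ j) (((DR s) ^ k) x) :=
    congrFun (congrArg DFunLike.coe h) x
  rw [Lpow, Lpow] at h2
  exact h2.symm

private lemma expand_left (s a : A) (m : ℕ) :
    s ^ m * a = ∑ k ∈ Finset.range (m + 1), m.choose k • (((DL s) ^ k) a * s ^ (m - k)) := by
  have hLm : (LL s) ^ m = ∑ k ∈ Finset.range (m + 1),
      (DL s) ^ k * (RR s) ^ (m - k) * (m.choose k : AddMonoid.End A) := by
    calc (LL s) ^ m = (DL s + RR s) ^ m := by rw [DL, sub_add_cancel]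
    _ = _ := (commDR s).add_pow m
  have := congrFun (congrArg DFunLike.coe hLm) a
  rw [Lpow] at this
  rw [this]
  erw [AddMonoidHom.finset_sum_apply]
  apply Finset.sum_congr rfl
  intro k _
  show ((DL s) ^ k) (((RR s) ^ (m - k)) ((m.choose k : AddMonoid.End A) a)) = _
  have hc : ((m.choose k : AddMonoid.End A)) a = m.choose k • a := rfl
  rw [hc, map_nsmul, map_nsmul, Rpow, ← DLpow_mul]

private lemma expand_right (s a : A) (m : ℕ) :
    a * s ^ m = ∑ k ∈ Finset.range (m + 1), m.choose k • (s ^ (m - k) * ((DR s) ^ k) a) := by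
  have hRm : (RR s) ^ m = ∑ k ∈ Finset.range (m + 1),
      (DR s) ^ k * (LL s) ^ (m - k) * (m.choose k : AddMonoid.End A) := by
    calc (RR s) ^ m = (DR s + LL s) ^ m := by rw [DR, sub_add_cancel]
    _ = _ := (commDL s).add_pow m
  have := congrFun (congrArg DFunLike.coe hRm) a
  rw [Rpow] at this
  rw [this]
  erw [AddMonoidHom.finset_sum_apply]
  apply Finset.sum_congr rfl
  intro k _
  show ((DR s) ^ k) (((LL s) ^ (m - k)) ((m.choose k : AddMonoid.End A) a)) = _
  have hc : ((m.choose k : AddMonoid.End A)) a = m.choose k • a := rfl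
  rw [hc, map_nsmul, map_nsmul, Lpow, ← mul_DRpow]

private lemma mem_setPow_pow (I : Set A) (E : AddMonoid.End A)
    (hE : ∀ k x, x ∈ setPow I k → E x ∈ setPow I (k + 1)) :
    ∀ k x, (E ^ k) x ∈ setPow I k := by
  intro k
  induction k with
  | zero => intro x; trivial
  | succ n ih =>
    intro x
    have : (E ^ (n + 1)) x = E ((E ^ n) x) := by rw [pow_succ']; rfl
    rw [this]
    exact hE n _ (ih x)

private lemma setPow_succ_bot (I : Set A) (N : ℕ) (h : setPow I N = ⊥) :
    setPow I (N + 1) = ⊥ := by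
  rw [setPow, eq_bot_iff, ← AddSubgroup.closure_singleton_zero, AddSubgroup.closure_le]
  rintro x ⟨a, ha, b, hb, rfl⟩
  rw [h, AddSubgroup.mem_bot] at hb
  simp [hb]

end Aux

/-- Let `A` be a ring with a nilpotent two-sided ideal `𝔞` such that the
associated graded ring `gr_𝔞 A` is commutative.  Then for every `s ∈ A` the set of powers of `s`
is a denominator set in `A`: the left and right Ore conditions and the left and right
reversibility conditions hold. -/
theorem statement3
    (A : Type) [Ring A] (I : TwoSidedIdeal A)
    (hnil : ∃ N : ℕ, setPow (I : Set A) N = ⊥)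
    (hcomm : ∀ (i j : ℕ) (x y : A), x ∈ setPow (I : Set A) i → y ∈ setPow (I : Set A) j →
      x * y - y * x ∈ setPow (I : Set A) (i + j + 1))
    (s : A) :
    (∀ (a : A) (n : ℕ), ∃ (b : A) (m : ℕ), s ^ m * a = b * s ^ n) ∧
    (∀ (a : A) (n : ℕ), ∃ (b : A) (m : ℕ), a * s ^ m = s ^ n * b) ∧
    (∀ (a : A) (n : ℕ), a * s ^ n = 0 → ∃ m : ℕ, s ^ m * a = 0) ∧
    (∀ (a : A) (n : ℕ), s ^ n * a = 0 → ∃ m : ℕ, a * s ^ m = 0) := by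
  obtain ⟨N₀, hN₀⟩ := hnil
  set N := N₀ + 1 with hNdef
  have hbot : setPow (I : Set A) N = ⊥ := setPow_succ_bot _ _ hN₀
  -- DL and DR raise the filtration degree
  have hDL : ∀ k x, x ∈ setPow (I : Set A) k → DL s x ∈ setPow (I : Set A) (k + 1) := by
    intro k x hx
    have := hcomm 0 k s x trivial hx
    simpa using this
  have hDR : ∀ k x, x ∈ setPow (I : Set A) k → DR s x ∈ setPow (I : Set A) (k + 1) := by
    intro k x hx
    have := hcomm 0 k s x trivial hx
    have h2 : -(s * x - x * s) ∈ setPow (I : Set A) (0 + k + 1) := neg_mem this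
    simpa using h2
  have hDLmem := mem_setPow_pow (I : Set A) (DL s) hDL
  have hDRmem := mem_setPow_pow (I : Set A) (DR s) hDR
  have hDLzero : ∀ k, N ≤ k → ∀ x, ((DL s) ^ k) x = 0 := by
    intro k hk x
    have hpow : (DL s) ^ k = (DL s) ^ (k - N) * (DL s) ^ N := by
      rw [← pow_add, Nat.sub_add_cancel hk]
    have hmem : ((DL s) ^ N) x ∈ setPow (I : Set A) N := hDLmem N x
    rw [hbot, AddSubgroup.mem_bot] at hmem
    have : ((DL s) ^ k) x = ((DL s) ^ (k - N)) (((DL s) ^ N) x) := by rw [hpow]; rfl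
    rw [this, hmem, map_zero]
  have hDRzero : ∀ k, N ≤ k → ∀ x, ((DR s) ^ k) x = 0 := by
    intro k hk x
    have hpow : (DR s) ^ k = (DR s) ^ (k - N) * (DR s) ^ N := by
      rw [← pow_add, Nat.sub_add_cancel hk]
    have hmem : ((DR s) ^ N) x ∈ setPow (I : Set A) N := hDRmem N x
    rw [hbot, AddSubgroup.mem_bot] at hmem
    have : ((DR s) ^ k) x = ((DR s) ^ (k - N)) (((DR s) ^ N) x) := by rw [hpow]; rfl
    rw [this, hmem, map_zero]
  refine ⟨?_, ?_, ?_, ?_⟩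
  · -- left Ore
    intro a n
    set m := n + N with hm
    refine ⟨∑ k ∈ Finset.range (m + 1), m.choose k • (((DL s) ^ k) a * s ^ (m - k - n)), m, ?_⟩
    rw [expand_left s a m, Finset.sum_mul]
    apply Finset.sum_congr rfl
    intro k hk
    rw [Finset.mem_range] at hk
    rw [smul_mul_assoc, mul_assoc, ← pow_add]
    by_cases hkN : k ≤ N
    · have he : m - k - n + n = m - k := by omega
      rw [he]
    · rw [hDLzero k (by omega) a]
      simp
  · -- right Ore
    intro a n
    set m := n + N with hm
    refine ⟨∑ k ∈ Finset.range (m + 1), m.choose k • (s ^ (m - k - n) * ((DR s) ^ k) a), m, ?_⟩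
    rw [expand_right s a m, Finset.mul_sum]
    apply Finset.sum_congr rfl
    intro k hk
    rw [Finset.mem_range] at hk
    rw [mul_smul_comm, ← mul_assoc, ← pow_add]
    by_cases hkN : k ≤ N
    · have he : n + (m - k - n) = m - k := by omega
      rw [he]
    · rw [hDRzero k (by omega) a]
      simp
  · -- left reversibility
    intro a n h
    refine ⟨n + N, ?_⟩
    rw [expand_left s a (n + N)]
    apply Finset.sum_eq_zero
    intro k hk
    rw [Finset.mem_range] at hk
    by_cases hkN : k ≤ N
    · have h1 : ((DL s) ^ k) a * s ^ n = 0 := by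
        rw [DLpow_mul, h, map_zero]
      have h2 : (n + N - k) = n + (N - k) := by omega
      rw [h2, pow_add, ← mul_assoc, h1, zero_mul, smul_zero]
    · rw [hDLzero k (by omega) a, zero_mul, smul_zero]
  · -- right reversibility
    intro a n h
    refine ⟨n + N, ?_⟩
    rw [expand_right s a (n + N)]
    apply Finset.sum_eq_zero
    intro k hk
    rw [Finset.mem_range] at hk
    by_cases hkN : k ≤ N
    · have h1 : s ^ n * ((DR s) ^ k) a = 0 := by
        rw [mul_DRpow, h, map_zero]
      have h2 : (n + N - k) = (N - k) + n := by omega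
      rw [h2, pow_add, mul_assoc, h1, mul_zero, smul_zero]
    · rw [hDRzero k (by omega) a, mul_zero, smul_zero]
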